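/- For the three-dimensional Klebsh–Tisserand case with J = diag(J_1,J_2,J_3), constraint Ω_3 = 0 and potential V(Γ) = (ε/2)⟨JΓ,Γ⟩ = (ε/2)(J_1Γ_1² + J_2Γ_2² + J_3Γ_3²), the function F = (1/2)(J_1²Ω_1² + J_2²Ω_2²) − (1/2)(A_1Γ_1² + A_2Γ_2² + A_3Γ_3²), with A = ε J^{-1} det J (i.e., A_i = ε det(J)/J_i), is a first integral. -/

import Mathlib

/-- For the 3D Klebsh–Tisserand case with `J = diag(J_1,J_2,J_3)`, constraint
`Ω_3 = 0` and potential `V(Γ) = (ε/2)⟨JΓ,Γ⟩`, the function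
`F = ½(J_1²Ω_1² + J_2²Ω_2²) − ½(A_1Γ_1² + A_2Γ_2² + A_3Γ_3²)` with
`A_i = ε det(J)/J_i` is a first integral. -/
theorem suslov_3d_klebsh_tisserand_integral
    (J1 J2 J3 ε : ℝ) (hJ1 : 0 < J1) (hJ2 : 0 < J2) (hJ3 : 0 < J3)
    (Ω1 Ω2 Γ1 Γ2 Γ3 : ℝ → ℝ)
    (hΩ1 : ∀ t, HasDerivAt Ω1 (ε * (J3 - J2) * Γ2 t * Γ3 t / J1) t)
    (hΩ2 : ∀ t, HasDerivAt Ω2 (ε * (J1 - J3) * Γ1 t * Γ3 t / J2) t)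
    (hΓ1 : ∀ t, HasDerivAt Γ1 (-(Γ3 t * Ω2 t)) t)
    (hΓ2 : ∀ t, HasDerivAt Γ2 (Γ3 t * Ω1 t) t)
    (hΓ3 : ∀ t, HasDerivAt Γ3 (Γ1 t * Ω2 t - Γ2 t * Ω1 t) t) :
    ∀ t, (1 / 2) * (J1 ^ 2 * (Ω1 t) ^ 2 + J2 ^ 2 * (Ω2 t) ^ 2)
        - (1 / 2) * ((ε * (J1 * J2 * J3) / J1) * (Γ1 t) ^ 2
            + (ε * (J1 * J2 * J3) / J2) * (Γ2 t) ^ 2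
            + (ε * (J1 * J2 * J3) / J3) * (Γ3 t) ^ 2)
      = (1 / 2) * (J1 ^ 2 * (Ω1 0) ^ 2 + J2 ^ 2 * (Ω2 0) ^ 2)
        - (1 / 2) * ((ε * (J1 * J2 * J3) / J1) * (Γ1 0) ^ 2
            + (ε * (J1 * J2 * J3) / J2) * (Γ2 0) ^ 2
            + (ε * (J1 * J2 * J3) / J3) * (Γ3 0) ^ 2) := by
  set F : ℝ → ℝ := fun t =>
    (1 / 2) * (J1 ^ 2 * (Ω1 t) ^ 2 + J2 ^ 2 * (Ω2 t) ^ 2)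
      - (1 / 2) * ((ε * (J1 * J2 * J3) / J1) * (Γ1 t) ^ 2
          + (ε * (J1 * J2 * J3) / J2) * (Γ2 t) ^ 2
          + (ε * (J1 * J2 * J3) / J3) * (Γ3 t) ^ 2) with hF
  have key : ∀ s, HasDerivAt F 0 s := by
    intro s
    have h := (((((hΩ1 s).pow 2).const_mul (J1 ^ 2)).add
        (((hΩ2 s).pow 2).const_mul (J2 ^ 2))).const_mul (1 / 2)).sub
      (((((hΓ1 s).pow 2).const_mul (ε * (J1 * J2 * J3) / J1)).add
        ((((hΓ2 s).pow 2).const_mul (ε * (J1 * J2 * J3) / J2)).add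
        (((hΓ3 s).pow 2).const_mul (ε * (J1 * J2 * J3) / J3)))).const_mul (1 / 2))
    convert h using 1
    · rfl
    · rfl
    · funext x; simp only [hF, Pi.add_apply, Pi.sub_apply, Pi.pow_apply]; ring
    · field_simp
      ring
  intro t
  have hdiff : Differentiable ℝ F := fun s => (key s).differentiableAt
  have hderiv : ∀ s, deriv F s = 0 := fun s => (key s).deriv
  exact is_const_of_deriv_eq_zero hdiff hderiv t 0
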